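/- Let X and A be Borel spaces, D a nonempty Borel subset of X×A with nonempty x-sections A(x), q a Borel measurable transition probability kernel from X×A to X, ω : X → [1,∞), u : D → ℝ with −bω(x) ≤ u(x,a) ≤ cω(x) on D for some b, c > 0, and δ : ℝ → ℝ, γ : [0,∞) → [0,∞) such that: γ is increasing with γ(s) < s for s > 0; |δ(z₁) − δ(z₂)| ≤ γ(|z₁ − z₂|) for all reals; δ is increasing with δ(0) = 0; γ is subadditive and γ(ω(x)y) ≤ ω(x)γ(y) for x ∈ X, y > 0; ∫_X ω(y) q(dy|x,a) ≤ αω(x) on D with either α ≤ 1 or (α > 1 and αγ(s) < s for all s > 0). Assume (W): each A(x) is compact and x ↦ A(x) is upper semicontinuous; u is upper semicontinuous on D; q is weakly continuous; ω is continuous; (x,a) ↦ ∫_X ω(y) q(dy|x,a) is continuous on D. Let Tv(x) = max_{a∈A(x)} [u(x,a) + ∫_X δ(v(y)) q(dy|x,a)], let v* be the unique fixed point of T among Borel measurable functions with sup_x |v(x)|/ω(x) < ∞, set V₀ = 𝟎 and V_n = T V_{n−1}, and define A_n*(x) = Argmax_{a∈A(x)} (u(x,a) + ∫_X δ(V_{n−1}(y))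 q(dy|x,a)) and A*(x) = Argmax_{a∈A(x)} (u(x,a) + ∫_X δ(v*(y)) q(dy|x,a)). Then for every x ∈ X the upper limit Ls A_n*(x) — the set of all accumulation points of sequences (a_n) with a_n ∈ A_n*(x) for all n — is nonempty and satisfies Ls A_n*(x) ⊂ A*(x). -/

import Mathlib

open MeasureTheory ProbabilityTheory Filter Topology


lemma usc_approx {Y : Type*} [MetricSpace Y] [Nonempty Y] (f : Y → ℝ)
    (hf : UpperSemicontinuous f) (B : ℝ) (hB : ∀ y, |f y| ≤ B) :
    ∃ F : ℕ → Y → ℝ, (∀ m, Continuous (F m)) ∧ (∀ m y, |F m y| ≤ B) ∧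
      (∀ m y, f y ≤ F m y) ∧ (∀ y, Tendsto (fun m => F m y) atTop (𝓝 (f y))) := by
  set F : ℕ → Y → ℝ := fun m y => ⨆ z, (f z - (m : ℝ) * dist y z) with hF
  have hbdd : ∀ (m : ℕ) (y : Y), BddAbove (Set.range fun z => f z - (m : ℝ) * dist y z) := by
    intro m y
    refine ⟨B, ?_⟩
    rintro _ ⟨z, rfl⟩
    have h1 := (abs_le.1 (hB z)).2
    have h2 : (0:ℝ) ≤ (m : ℝ) * dist y z := by positivity
    simp only []
    linarith
  have hle : ∀ m y, f y ≤ F m y := by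
    intro m y
    have := le_ciSup (hbdd m y) y
    simpa using this
  have hub : ∀ m y, F m y ≤ B := by
    intro m y
    refine ciSup_le fun z => ?_
    have h1 := (abs_le.1 (hB z)).2
    have h2 : (0:ℝ) ≤ (m : ℝ) * dist y z := by positivity
    linarith
  have hBnn : 0 ≤ B := le_trans (abs_nonneg _) (hB Classical.ofNonempty)
  have habs : ∀ m y, |F m y| ≤ B := by
    intro m y
    rw [abs_le]
    refine ⟨?_, hub m y⟩
    have := (abs_le.1 (hB y)).1
    linarith [hle m y]
  have hlip1 : ∀ (m : ℕ) (y₁ y₂ : Y), F m y₁ ≤ F m y₂ + (m:ℝ) * dist y₁ y₂ := by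
    intro m y₁ y₂
    refine ciSup_le fun z => ?_
    have htri : dist y₁ z ≥ dist y₂ z - dist y₁ y₂ := by
      have := dist_triangle y₂ y₁ z
      rw [dist_comm y₂ y₁] at this
      linarith
    have h2 : f z - (m:ℝ) * dist y₂ z ≤ F m y₂ := le_ciSup (hbdd m y₂) z
    have hm : (0:ℝ) ≤ (m:ℝ) := by positivity
    nlinarith
  have hcont : ∀ m, Continuous (F m) := by
    intro m
    refine (LipschitzWith.of_dist_le_mul (K := (m : NNReal)) ?_).continuous
    intro y₁ y₂
    rw [Real.dist_eq, abs_le]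
    push_cast
    constructor
    · have := hlip1 m y₂ y₁
      rw [dist_comm y₂ y₁] at this
      linarith
    · linarith [hlip1 m y₁ y₂]
  refine ⟨F, hcont, habs, hle, ?_⟩
  intro y
  rw [Metric.tendsto_atTop]
  intro ε hε
  have husc := hf y (f y + ε / 2) (by linarith)
  rw [Metric.eventually_nhds_iff] at husc
  obtain ⟨d, hd, hnear⟩ := husc
  obtain ⟨N, hN⟩ := exists_nat_ge ((2 * B) / d)
  refine ⟨N, fun m hm => ?_⟩
  have hkey : F m y ≤ f y + ε / 2 := by
    refine ciSup_le fun z => ?_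
    by_cases hz : dist z y < d
    · have := hnear hz
      have h2 : (0:ℝ) ≤ (m:ℝ) * dist y z := by positivity
      linarith
    · push_neg at hz
      have hmN : ((N:ℝ)) ≤ (m:ℝ) := by exact_mod_cast hm
      have h1 : (2*B)/d ≤ (m:ℝ) := le_trans hN hmN
      have h2 : 2 * B ≤ (m:ℝ) * d := by
        rw [div_le_iff₀ hd] at h1; linarith
      have h3 : (m:ℝ) * d ≤ (m:ℝ) * dist y z := by
        rw [dist_comm y z]
        exact mul_le_mul_of_nonneg_left hz (by positivity)
      have h4 := (abs_le.1 (hB z)).2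
      have h5 := (abs_le.1 (hB y)).1
      linarith
  have hge := hle m y
  rw [Real.dist_eq, abs_of_nonneg (by linarith)]
  linarith


lemma usc_min_const {Y : Type*} [TopologicalSpace Y] {f : Y → ℝ} (hf : UpperSemicontinuous f)
    (c : ℝ) : UpperSemicontinuous (fun y => min (f y) c) := by
  intro x y hy
  rcases le_or_gt (f x) c with h | h
  · have : f x < y := by simpa [min_eq_left h] using hy
    filter_upwards [hf x y this] with z hz
    exact lt_of_le_of_lt (min_le_left _ _) hz
  · have : c < y := by simpa [min_eq_right h.le] using hy
    filter_upwards with z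
    exact lt_of_le_of_lt (min_le_right _ _) this

lemma usc_max_const {Y : Type*} [TopologicalSpace Y] {f : Y → ℝ} (hf : UpperSemicontinuous f)
    (c : ℝ) : UpperSemicontinuous (fun y => max (f y) c) := by
  intro x y hy
  have h1 : f x < y := lt_of_le_of_lt (le_max_left _ _) hy
  have h2 : c < y := lt_of_le_of_lt (le_max_right _ _) hy
  filter_upwards [hf x y h1] with z hz
  exact max_lt hz h2

lemma usc_integral_lt {Y : Type*} [MetricSpace Y] [Nonempty Y] [MeasurableSpace Y]
    [OpensMeasurableSpace Y]
    (μ : ℕ → Measure Y) (ν : Measure Y) (hμP : ∀ k, IsProbabilityMeasure (μ k))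
    (hνP : IsProbabilityMeasure ν)
    (ω : Y → ℝ) (hωc : Continuous ω) (hω1 : ∀ y, 1 ≤ ω y)
    (hωint : ∀ k, Integrable ω (μ k)) (hωintν : Integrable ω ν)
    (hconv : ∀ φ : Y → ℝ, Continuous φ → (∃ C, ∀ y, |φ y| ≤ C) →
        Tendsto (fun k => ∫ y, φ y ∂(μ k)) atTop (𝓝 (∫ y, φ y ∂ν)))
    (hωconv : Tendsto (fun k => ∫ y, ω y ∂(μ k)) atTop (𝓝 (∫ y, ω y ∂ν)))
    (f : Y → ℝ) (hf : UpperSemicontinuous f) (K : ℝ) (hfK : ∀ y, |f y| ≤ K * ω y)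
    (ε : ℝ) (hε : 0 < ε) :
    ∀ᶠ k in atTop, ∫ y, f y ∂(μ k) < ∫ y, f y ∂ν + ε := by
  haveI := hμP
  haveI := hνP
  have hy₀ : ∃ y₀ : Y, True := ⟨Classical.ofNonempty, trivial⟩
  obtain ⟨y₀, -⟩ := hy₀
  have hK0 : 0 ≤ K := by nlinarith [abs_nonneg (f y₀), hfK y₀, hω1 y₀]
  set κ := K + 1 with hκ
  have hκ0 : 0 < κ := by linarith
  have hfm : Measurable f := hf.measurable
  have hωm : Measurable ω := hωc.measurable
  have hfint : ∀ k, Integrable f (μ k) := fun k =>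
    ((hωint k).const_mul K).mono' hfm.aestronglyMeasurable
      (Filter.Eventually.of_forall fun y => by simpa [abs_of_nonneg] using hfK y)
  have hfintν : Integrable f ν :=
    (hωintν.const_mul K).mono' hfm.aestronglyMeasurable
      (Filter.Eventually.of_forall fun y => by simpa using hfK y)
  -- uniform integrability truncation of ω
  set g : ℕ → Y → ℝ := fun M y => ω y - min (ω y) (M : ℝ) with hg
  have hgm : ∀ M, Continuous (g M) := fun M => hωc.sub (hωc.min continuous_const)
  have hgnn : ∀ M y, 0 ≤ g M y := fun M y => by
    simp only [hg, sub_nonneg]; exact min_le_left _ _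
  have hgle : ∀ M y, g M y ≤ ω y := fun M y => by
    have h0 : (0:ℝ) ≤ min (ω y) (M:ℝ) := le_min (le_trans zero_le_one (hω1 y)) (by positivity)
    simp only [hg]; linarith
  have hgν : Tendsto (fun M => ∫ y, g M y ∂ν) atTop (𝓝 0) := by
    have h0 : (0:ℝ) = ∫ y, (0:ℝ) ∂ν := by simp
    rw [h0]
    refine tendsto_integral_of_dominated_convergence ω
      (fun M => (hgm M).aestronglyMeasurable) hωintν
      (fun M => Filter.Eventually.of_forall fun y => ?_)
      (Filter.Eventually.of_forall fun y => ?_)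
    · rw [Real.norm_eq_abs, abs_of_nonneg (hgnn M y)]; exact hgle M y
    · obtain ⟨N, hN⟩ := exists_nat_ge (ω y)
      refine Tendsto.congr' ?_ tendsto_const_nhds
      filter_upwards [eventually_ge_atTop N] with M hM
      have : ω y ≤ (M:ℝ) := le_trans hN (by exact_mod_cast hM)
      simp [hg, min_eq_left this]
  obtain ⟨M₀, hM₀⟩ : ∃ M₀ : ℕ, ∫ y, g M₀ y ∂ν < ε / (8 * κ) := by
    have := hgν.eventually_lt_const (show (0:ℝ) < ε / (8*κ) by positivity)
    exact this.exists
  have hminint : ∀ k, Integrable (fun y => min (ω y) (M₀:ℝ)) (μ k) := fun k =>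
    (integrable_const ((M₀:ℝ))).mono' (hωc.min continuous_const).aestronglyMeasurable
      (Filter.Eventually.of_forall fun y => by
        rw [Real.norm_eq_abs, abs_of_nonneg (le_min (le_trans zero_le_one (hω1 y)) (by positivity))]
        exact min_le_right _ _)
  have hminintν : Integrable (fun y => min (ω y) (M₀:ℝ)) ν :=
    (integrable_const ((M₀:ℝ))).mono' (hωc.min continuous_const).aestronglyMeasurable
      (Filter.Eventually.of_forall fun y => by
        rw [Real.norm_eq_abs, abs_of_nonneg (le_min (le_trans zero_le_one (hω1 y)) (by positivity))]
        exact min_le_right _ _)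
  have hgint : ∀ k, Integrable (g M₀) (μ k) := fun k => (hωint k).sub (hminint k)
  have hgintν : Integrable (g M₀) ν := hωintν.sub hminintν
  have hgconvk : Tendsto (fun k => ∫ y, g M₀ y ∂(μ k)) atTop (𝓝 (∫ y, g M₀ y ∂ν)) := by
    have heq : ∀ k, ∫ y, g M₀ y ∂(μ k)
        = (∫ y, ω y ∂(μ k)) - ∫ y, min (ω y) (M₀:ℝ) ∂(μ k) := fun k =>
      integral_sub (hωint k) (hminint k)
    have heqν : ∫ y, g M₀ y ∂ν = (∫ y, ω y ∂ν) - ∫ y, min (ω y) (M₀:ℝ) ∂ν :=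
      integral_sub hωintν hminintν
    rw [heqν]
    refine Tendsto.congr (fun k => (heq k).symm) (hωconv.sub ?_)
    exact hconv _ (hωc.min continuous_const) ⟨(M₀:ℝ), fun y => by
      rw [abs_of_nonneg (le_min (le_trans zero_le_one (hω1 y)) (by positivity))]
      exact min_le_right _ _⟩
  have hUI : ∀ᶠ k in atTop, ∫ y, g M₀ y ∂(μ k) < ε / (4 * κ) := by
    refine hgconvk.eventually_lt_const ?_
    have : ε / (8*κ) < ε / (4*κ) := by
      apply div_lt_div_of_pos_left hε (by positivity) (by linarith)
    linarith
  -- truncate f above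
  set h : Y → ℝ := fun y => min (f y) (K * M₀) with hh
  have hhusc : UpperSemicontinuous h := usc_min_const hf _
  have hhm : Measurable h := hhusc.measurable
  have hhabs : ∀ y, |h y| ≤ K * ω y + K * M₀ := by
    intro y
    have hω0 : (0:ℝ) ≤ K * ω y := by
      have := hω1 y; nlinarith
    have hM0 : (0:ℝ) ≤ K * M₀ := by positivity
    rw [abs_le]
    constructor
    · refine le_min ?_ ?_
      · linarith [(abs_le.1 (hfK y)).1]
      · linarith
    · have := (abs_le.1 (hfK y)).2
      calc h y ≤ f y := min_le_left _ _
        _ ≤ K * ω y := this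
        _ ≤ K * ω y + K * M₀ := by linarith
  have hhint : ∀ k, Integrable h (μ k) := fun k =>
    (((hωint k).const_mul K).add (integrable_const _)).mono' hhm.aestronglyMeasurable
      (Filter.Eventually.of_forall fun y => by simpa using hhabs y)
  have hhintν : Integrable h ν :=
    ((hωintν.const_mul K).add (integrable_const _)).mono' hhm.aestronglyMeasurable
      (Filter.Eventually.of_forall fun y => by simpa using hhabs y)
  have hfle : ∀ y, f y ≤ h y + K * g M₀ y := by
    intro y
    rcases le_or_gt (f y) (K * M₀) with hc | hc
    · have : (0:ℝ) ≤ K * g M₀ y := mul_nonneg hK0 (hgnn _ y)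
      simp only [hh, min_eq_left hc]; linarith
    · have hmin : min (ω y) (M₀:ℝ) ≤ (M₀:ℝ) := min_le_right _ _
      have : f y ≤ K * ω y := (abs_le.1 (hfK y)).2
      simp only [hh, min_eq_right hc.le, hg]
      nlinarith
  -- truncate below
  have hLν : Tendsto (fun L : ℕ => ∫ y, max (h y) (-(L:ℝ)) ∂ν) atTop (𝓝 (∫ y, h y ∂ν)) := by
    refine tendsto_integral_of_dominated_convergence (fun y => |h y|)
      (fun L => (usc_max_const hhusc _).measurable.aestronglyMeasurable) hhintν.abs
      (fun L => Filter.Eventually.of_forall fun y => ?_)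
      (Filter.Eventually.of_forall fun y => ?_)
    · rw [Real.norm_eq_abs]
      rcases le_or_gt (-(L:ℝ)) (h y) with hc | hc
      · rw [max_eq_left hc]
      · rw [max_eq_right hc.le, abs_le]
        have hL0 : (0:ℝ) ≤ (L:ℝ) := by positivity
        constructor
        · linarith [neg_abs_le (h y)]
        · linarith [abs_nonneg (h y)]
    · obtain ⟨N, hN⟩ := exists_nat_ge (|h y|)
      refine Tendsto.congr' ?_ tendsto_const_nhds
      filter_upwards [eventually_ge_atTop N] with L hL
      have h1 : -(L:ℝ) ≤ h y := by
        have : |h y| ≤ (L:ℝ) := le_trans hN (by exact_mod_cast hL)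
        linarith [neg_abs_le (h y)]
      rw [max_eq_left h1]
  obtain ⟨L₀, hL₀⟩ : ∃ L₀ : ℕ, ∫ y, max (h y) (-(L₀:ℝ)) ∂ν < (∫ y, h y ∂ν) + ε / 8 := by
    have := hLν.eventually_lt_const (show (∫ y, h y ∂ν) < (∫ y, h y ∂ν) + ε/8 by linarith)
    exact this.exists
  set h2 : Y → ℝ := fun y => max (h y) (-(L₀:ℝ)) with hh2
  have hh2usc : UpperSemicontinuous h2 := usc_max_const hhusc _
  set B : ℝ := max (K * M₀) (L₀:ℝ) with hB
  have hh2abs : ∀ y, |h2 y| ≤ B := by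
    intro y
    have hKM : K * (M₀:ℝ) ≤ B := le_max_left _ _
    have hLB : (L₀:ℝ) ≤ B := le_max_right _ _
    have hL0 : (0:ℝ) ≤ (L₀:ℝ) := by positivity
    have hKM0 : (0:ℝ) ≤ K * (M₀:ℝ) := by positivity
    rw [abs_le]
    constructor
    · have : -(L₀:ℝ) ≤ h2 y := le_max_right _ _
      linarith
    · have h1 : h y ≤ K * M₀ := min_le_right _ _
      exact max_le (by linarith) (by linarith)
  have hh2int : ∀ k, Integrable h2 (μ k) := fun k =>
    (integrable_const B).mono' hh2usc.measurable.aestronglyMeasurable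
      (Filter.Eventually.of_forall fun y => by simpa using hh2abs y)
  have hh2intν : Integrable h2 ν :=
    (integrable_const B).mono' hh2usc.measurable.aestronglyMeasurable
      (Filter.Eventually.of_forall fun y => by simpa using hh2abs y)
  -- Lipschitz approximation of h2
  obtain ⟨F, hFc, hFb, hFge, hFconv⟩ := usc_approx h2 hh2usc B hh2abs
  have hFν : Tendsto (fun m => ∫ y, F m y ∂ν) atTop (𝓝 (∫ y, h2 y ∂ν)) := by
    refine tendsto_integral_of_dominated_convergence (fun _ => B)
      (fun m => (hFc m).aestronglyMeasurable) (integrable_const B)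
      (fun m => Filter.Eventually.of_forall fun y => by simpa using hFb m y)
      (Filter.Eventually.of_forall fun y => hFconv y)
  obtain ⟨m₀, hm₀⟩ : ∃ m₀ : ℕ, ∫ y, F m₀ y ∂ν < (∫ y, h2 y ∂ν) + ε / 8 := by
    have := hFν.eventually_lt_const (show (∫ y, h2 y ∂ν) < (∫ y, h2 y ∂ν) + ε/8 by linarith)
    exact this.exists
  have hFμconv : ∀ᶠ k in atTop, ∫ y, F m₀ y ∂(μ k) < (∫ y, F m₀ y ∂ν) + ε / 8 := by
    refine (hconv (F m₀) (hFc m₀) ⟨B, hFb m₀⟩).eventually_lt_const (by linarith)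
  have hFint : ∀ k, Integrable (F m₀) (μ k) := fun k =>
    (integrable_const B).mono' (hFc m₀).aestronglyMeasurable
      (Filter.Eventually.of_forall fun y => by simpa using hFb m₀ y)
  -- combine
  filter_upwards [hUI, hFμconv] with k hk1 hk2
  have step1 : ∫ y, f y ∂(μ k) ≤ (∫ y, h y ∂(μ k)) + K * ∫ y, g M₀ y ∂(μ k) := by
    have hint : Integrable (fun y => h y + K * g M₀ y) (μ k) :=
      (hhint k).add ((hgint k).const_mul K)
    have := integral_mono (hfint k) hint hfle
    rwa [integral_add (hhint k) ((hgint k).const_mul K), integral_const_mul] at this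
  have step2 : K * ∫ y, g M₀ y ∂(μ k) ≤ ε / 4 := by
    have h1 : K * ∫ y, g M₀ y ∂(μ k) ≤ K * (ε / (4*κ)) := by
      apply mul_le_mul_of_nonneg_left (le_of_lt hk1) hK0
    have h2 : K * (ε / (4*κ)) ≤ κ * (ε / (4*κ)) := by
      apply mul_le_mul_of_nonneg_right (by linarith) (by positivity)
    have h3 : κ * (ε / (4*κ)) = ε / 4 := by
      field_simp
    linarith
  have step3 : ∫ y, h y ∂(μ k) ≤ ∫ y, h2 y ∂(μ k) :=
    integral_mono (hhint k) (hh2int k) fun y => le_max_left _ _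
  have step4 : ∫ y, h2 y ∂(μ k) ≤ ∫ y, F m₀ y ∂(μ k) :=
    integral_mono (hh2int k) (hFint k) fun y => hFge m₀ y
  have step5 : ∫ y, h y ∂ν ≤ ∫ y, f y ∂ν :=
    integral_mono hhintν hfintν fun y => min_le_left _ _
  have hL₀' : ∫ y, h2 y ∂ν < (∫ y, h y ∂ν) + ε / 8 := hL₀
  linarith


/-- From an usc compact-valued correspondence: sequences in the graph over a convergent
base sequence have a cluster point in the limit fiber. -/
lemma corr_clusterPt {X A : Type*} [TopologicalSpace X] [TopologicalSpace A]
    (D : Set (X × A)) (x : X)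
    (hAcomp : IsCompact {a : A | (x, a) ∈ D})
    (hAusc : ∀ K : Set A, IsClosed K → IsClosed {x' : X | ∃ a ∈ K, (x', a) ∈ D})
    (xs : ℕ → X) (as : ℕ → A) (hmem : ∀ k, (xs k, as k) ∈ D)
    (hx : Tendsto xs atTop (𝓝 x)) :
    ∃ a : A, (x, a) ∈ D ∧ MapClusterPt a atTop as := by
  by_contra hcon
  push_neg at hcon
  -- for each a in the fiber, an open nbhd eventually avoided
  have hU : ∀ a ∈ {a : A | (x, a) ∈ D}, ∃ U : Set A, IsOpen U ∧ a ∈ U ∧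
      ∀ᶠ k in atTop, as k ∉ U := by
    intro a ha
    have := hcon a ha
    rw [mapClusterPt_iff_frequently] at this
    push_neg at this
    obtain ⟨s, hs, hfreq⟩ := this
    obtain ⟨U, hUs, hUo, haU⟩ := mem_nhds_iff.1 hs
    exact ⟨U, hUo, haU, hfreq.mono fun k hk hU => hk (hUs hU)⟩
  choose! U hUo hUmem hUav using hU
  obtain ⟨t, htsub, htcover⟩ := hAcomp.elim_nhds_subcover U
    (fun a ha => (hUo a ha).mem_nhds (hUmem a ha))
  -- eventually as k avoids all of the finite cover
  have hav : ∀ᶠ k in atTop, ∀ a ∈ t, as k ∉ U a := by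
    rw [eventually_all_finset]
    intro a ha
    exact hUav a (htsub a ha)
  set Kc : Set A := (⋃ a ∈ t, U a)ᶜ with hKc
  have hKcclosed : IsClosed Kc := (isOpen_biUnion fun a ha => hUo a (htsub a ha)).isClosed_compl
  have hev : ∀ᶠ k in atTop, xs k ∈ {x' : X | ∃ a ∈ Kc, (x', a) ∈ D} := by
    filter_upwards [hav] with k hk
    refine ⟨as k, ?_, hmem k⟩
    intro hmemU
    simp only [Set.mem_iUnion] at hmemU
    obtain ⟨a, ha', hU'⟩ := hmemU
    exact hk a ha' hU'
  have hxmem : x ∈ {x' : X | ∃ a ∈ Kc, (x', a) ∈ D} :=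
    (hAusc Kc hKcclosed).mem_of_tendsto hx hev
  obtain ⟨a, haK, haD⟩ := hxmem
  have : a ∈ ⋃ a ∈ t, U a := htcover haD
  exact haK this

/-- cluster point of a sequence yields a convergent subsequence in a metric space. -/
lemma clusterPt_subseq {A : Type*} [MetricSpace A] {a : A} {as : ℕ → A}
    (h : MapClusterPt a atTop as) :
    ∃ ψ : ℕ → ℕ, StrictMono ψ ∧ Tendsto (as ∘ ψ) atTop (𝓝 a) := by
  have hfreq : ∀ n : ℕ, ∃ᶠ k in atTop, dist (as k) a < 1 / (n + 1) := by
    intro n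
    have := (mapClusterPt_iff_frequently.1 h) (Metric.ball a (1 / (n + 1)))
      (Metric.ball_mem_nhds a (by positivity))
    simpa [Metric.mem_ball] using this
  obtain ⟨ψ, hψmono, hψ⟩ := Filter.extraction_forall_of_frequently hfreq
  refine ⟨ψ, hψmono, ?_⟩
  rw [Metric.tendsto_atTop]
  intro ε hε
  obtain ⟨N, hN⟩ := exists_nat_gt (1 / ε)
  refine ⟨N, fun n hn => ?_⟩
  have h1 : dist (as (ψ n)) a < 1 / (n + 1) := hψ n
  have h2 : 1 / ((n:ℝ) + 1) ≤ 1 / N := by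
    apply one_div_le_one_div_of_le
    · exact_mod_cast Nat.pos_of_ne_zero (by rintro rfl; simp at hN; linarith [hN, hε])
    · exact_mod_cast Nat.le_succ_of_le hn
  have hN0 : (0:ℝ) < N := by
    by_contra hN0
    push_neg at hN0
    have : (1:ℝ)/ε ≤ 0 := lt_of_lt_of_le hN hN0 |>.le
    have : (0:ℝ) < 1/ε := by positivity
    linarith
  have h3 : 1 / (N:ℝ) < ε := by
    rw [div_lt_iff₀ hN0]
    rw [div_lt_iff₀ hε] at hN
    linarith [mul_comm ε (N:ℝ)]
  calc dist (as (ψ n)) a < 1/(n+1) := h1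
    _ ≤ 1/N := h2
    _ < ε := h3

/-- an usc function on a nonempty compact set attains its maximum. -/
lemma usc_exists_max {A : Type*} [MetricSpace A] {S : Set A} (hS : IsCompact S)
    (hne : S.Nonempty) {g : A → ℝ} (hg : UpperSemicontinuousOn g S) :
    ∃ a ∈ S, ∀ a' ∈ S, g a' ≤ g a := by
  -- bounded above
  have hbdd : BddAbove (g '' S) := by
    by_contra hb
    have : ∀ n : ℕ, ∃ a ∈ S, (n : ℝ) < g a := by
      intro n
      by_contra hcon
      push_neg at hcon
      exact hb ⟨n, by rintro _ ⟨a, ha, rfl⟩; exact hcon a ha⟩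
    choose as hasS hasg using this
    obtain ⟨a, haS, ψ, hψmono, hψconv⟩ := hS.tendsto_subseq (x := as) hasS
    have husc := hg a haS (g a + 1) (by linarith)
    have hev : ∀ᶠ j in atTop, g (as (ψ j)) < g a + 1 := by
      have : Tendsto (fun j => as (ψ j)) atTop (𝓝[S] a) :=
        tendsto_nhdsWithin_iff.2 ⟨hψconv, Filter.Eventually.of_forall fun j => hasS _⟩
      exact this.eventually husc
    obtain ⟨N, hN⟩ := exists_nat_gt (g a + 1)
    have : ∀ᶠ j in (atTop : Filter ℕ), False := by
      filter_upwards [hev, eventually_ge_atTop N] with j h1 h2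
      have : (N:ℝ) ≤ (ψ j : ℝ) := by exact_mod_cast le_trans h2 (hψmono.le_apply)
      have := hasg (ψ j)
      linarith
    simpa using this.exists
  set s := sSup (g '' S) with hs
  have happrox : ∀ n : ℕ, ∃ a ∈ S, s - 1/(n+1) < g a := by
    intro n
    have h1 : s - 1/(n+1) < s := by
      have : (0:ℝ) < 1/((n:ℝ)+1) := by positivity
      linarith
    obtain ⟨y, hy, hy2⟩ := exists_lt_of_lt_csSup (hne.image g) h1
    obtain ⟨a, ha, rfl⟩ := hy
    exact ⟨a, ha, hy2⟩
  choose as hasS hasg using happrox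
  obtain ⟨a, haS, ψ, hψmono, hψconv⟩ := hS.tendsto_subseq (x := as) hasS
  refine ⟨a, haS, fun a' ha' => ?_⟩
  have hle : g a' ≤ s := le_csSup hbdd ⟨a', ha', rfl⟩
  -- show s ≤ g a
  have hsge : s ≤ g a := by
    by_contra hcon
    push_neg at hcon
    have husc := hg a haS ((g a + s)/2) (by linarith)
    have hev : ∀ᶠ j in atTop, g (as (ψ j)) < (g a + s)/2 := by
      have : Tendsto (fun j => as (ψ j)) atTop (𝓝[S] a) :=
        tendsto_nhdsWithin_iff.2 ⟨hψconv, Filter.Eventually.of_forall fun j => hasS _⟩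
      exact this.eventually husc
    have hev2 : ∀ᶠ j in atTop, s - 1/((ψ j : ℝ)+1) < g (as (ψ j)) :=
      Filter.Eventually.of_forall fun j => hasg (ψ j)
    have hgap : (0:ℝ) < (s - g a)/2 := by linarith
    obtain ⟨N, hN⟩ := exists_nat_gt (2/(s - g a))
    have : ∀ᶠ j in (atTop : Filter ℕ), False := by
      filter_upwards [hev, hev2, eventually_ge_atTop N] with j h1 h2 h3
      have hψj : (N:ℝ) ≤ (ψ j:ℝ) := by exact_mod_cast le_trans h3 hψmono.le_apply
      have hN1 : 1/((ψ j:ℝ)+1) ≤ 1/((N:ℝ)+1) := by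
        apply one_div_le_one_div_of_le (by positivity) (by linarith)
      have hNpos : (0:ℝ) < (N:ℝ)+1 := by positivity
      have h2N : 2/(s - g a) < (N:ℝ)+1 := by linarith [hN]
      have hgap2 : (0:ℝ) < s - g a := by linarith
      have h2N' : 2 < ((N:ℝ)+1) * (s - g a) := by
        rw [div_lt_iff₀ hgap2] at h2N
        nlinarith
      have : 1/((N:ℝ)+1) < (s - g a)/2 := by
        rw [div_lt_div_iff₀ hNpos (by norm_num : (0:ℝ) < 2)]
        nlinarith
      linarith
    simpa using this.exists
  linarith

noncomputable def bellmanOp {X A : Type*} [MeasurableSpace X] [MeasurableSpace A]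
    (q : Kernel (X × A) X) (D : Set (X × A)) (u : X × A → ℝ) (δ : ℝ → ℝ)
    (v : X → ℝ) (x : X) : ℝ :=
  sSup ((fun a => u (x, a) + ∫ y, δ (v y) ∂(q (x, a))) '' {a : A | (x, a) ∈ D})

set_option maxHeartbeats 1000000 in
/-- Policy iteration (Theorem 3 of the paper): for every `x`, the upper limit
`Ls A_n*(x)` of the argmax sets of the value-iteration functions `V_n = T⁽ⁿ⁾𝟎`
is nonempty and contained in the argmax set `A*(x)` of the Bellman equation
for the fixed point `v*` of `T`. -/
theorem policy_iteration_accumulation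
    {X A : Type*}
    [MetricSpace X] [SecondCountableTopology X] [MeasurableSpace X] [BorelSpace X] [Nonempty X]
    [MetricSpace A] [SecondCountableTopology A] [MeasurableSpace A] [BorelSpace A] [Nonempty A]
    (D : Set (X × A)) (hD : MeasurableSet D) (hDne : ∀ x : X, ∃ a : A, (x, a) ∈ D)
    (q : Kernel (X × A) X) [IsMarkovKernel q]
    (ω : X → ℝ) (hωm : Measurable ω) (hω1 : ∀ x, 1 ≤ ω x)
    (u : X × A → ℝ) (hu : Measurable u)
    -- assumptions (A)
    (b c : ℝ) (hb : 0 < b) (hc : 0 < c)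
    (huA : ∀ p ∈ D, -(b * ω p.1) ≤ u p ∧ u p ≤ c * ω p.1)
    -- assumptions (B)
    (δ : ℝ → ℝ) (γ : ℝ → ℝ)
    (hγm : MonotoneOn γ (Set.Ici 0)) (hγ0 : ∀ s : ℝ, 0 ≤ s → 0 ≤ γ s)
    (hγlt : ∀ s : ℝ, 0 < s → γ s < s)
    (hδγ : ∀ z₁ z₂ : ℝ, |δ z₁ - δ z₂| ≤ γ |z₁ - z₂|)
    (hδm : Monotone δ) (hδ0 : δ 0 = 0)
    (hγsub : ∀ y : ℝ, 0 ≤ y → ∀ s : ℝ, 0 ≤ s → γ (y + s) ≤ γ y + γ s)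
    (hγω : ∀ x : X, ∀ y : ℝ, 0 < y → γ (ω x * y) ≤ ω x * γ y)
    (α : ℝ) (hα : 0 < α)
    (hωq : ∀ p ∈ D, Integrable ω (q p) ∧ ∫ y, ω y ∂(q p) ≤ α * ω p.1)
    (hαcase : α ≤ 1 ∨ (1 < α ∧ ∀ s : ℝ, 0 < s → α * γ s < s))
    -- assumptions (W)
    (hAcomp : ∀ x : X, IsCompact {a : A | (x, a) ∈ D})
    (hAusc : ∀ K : Set A, IsClosed K → IsClosed {x : X | ∃ a ∈ K, (x, a) ∈ D})
    (huusc : UpperSemicontinuousOn u D)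
    (hqw : ∀ φ : X → ℝ, Continuous φ → (∃ C : ℝ, ∀ y, |φ y| ≤ C) →
      ContinuousOn (fun p : X × A => ∫ y, φ y ∂(q p)) D)
    (hωc : Continuous ω)
    (hωqc : ContinuousOn (fun p : X × A => ∫ y, ω y ∂(q p)) D)
    -- the fixed point `v*` of `T`
    (vstar : X → ℝ) (hvstarm : Measurable vstar)
    (hvstarb : ∃ C : ℝ, ∀ x, |vstar x| ≤ C * ω x)
    (hvstarfix : bellmanOp q D u δ vstar = vstar) :
    ∀ x : X,
      (∃ (a : A) (aseq : ℕ → A),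
        (∀ n : ℕ, aseq n ∈ {a' : A | (x, a') ∈ D ∧ ∀ b' : A, (x, b') ∈ D →
          u (x, b') + ∫ y, δ ((bellmanOp q D u δ)^[n] (fun _ => 0) y) ∂(q (x, b')) ≤
            u (x, a') + ∫ y, δ ((bellmanOp q D u δ)^[n] (fun _ => 0) y) ∂(q (x, a'))}) ∧
        MapClusterPt a atTop aseq) ∧
      (∀ a : A,
        (∃ aseq : ℕ → A,
          (∀ n : ℕ, aseq n ∈ {a' : A | (x, a') ∈ D ∧ ∀ b' : A, (x, b') ∈ D →
            u (x, b') + ∫ y, δ ((bellmanOp q D u δ)^[n] (fun _ => 0) y) ∂(q (x, b')) ≤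
              u (x, a') + ∫ y, δ ((bellmanOp q D u δ)^[n] (fun _ => 0) y) ∂(q (x, a'))}) ∧
          MapClusterPt a atTop aseq) →
        (x, a) ∈ D ∧ ∀ b : A, (x, b) ∈ D →
          u (x, b) + ∫ y, δ (vstar y) ∂(q (x, b)) ≤
            u (x, a) + ∫ y, δ (vstar y) ∂(q (x, a))) := by
  classical
  -- notation
  set T := bellmanOp q D u δ with hT
  set V : ℕ → X → ℝ := fun n => T^[n] (fun _ => 0) with hV
  have hViter : ∀ n, V (n + 1) = T (V n) := fun n => Function.iterate_succ_apply' T n _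
  -- basic facts
  have hω0 : ∀ x, (0:ℝ) < ω x := fun x => lt_of_lt_of_le one_pos (hω1 x)
  have hγ00 : γ 0 = 0 := by
    by_contra hne
    have hpos : 0 < γ 0 := lt_of_le_of_ne (hγ0 0 le_rfl) (Ne.symm hne)
    have h1 : γ 0 ≤ γ (γ 0) := hγm (Set.mem_Ici.2 le_rfl) (Set.mem_Ici.2 hpos.le) hpos.le
    have h2 : γ (γ 0) < γ 0 := hγlt _ hpos
    linarith
  have hγle : ∀ s, 0 ≤ s → γ s ≤ s := by
    intro s hs
    rcases eq_or_lt_of_le hs with h | h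
    · rw [← h, hγ00]
    · exact (hγlt s h).le
  have hδlip : ∀ z₁ z₂ : ℝ, |δ z₁ - δ z₂| ≤ |z₁ - z₂| := fun z₁ z₂ =>
    le_trans (hδγ z₁ z₂) (hγle _ (abs_nonneg _))
  have hδcont : Continuous δ := by
    refine (LipschitzWith.of_dist_le_mul (K := 1) fun z₁ z₂ => ?_).continuous
    rw [Real.dist_eq, Real.dist_eq, NNReal.coe_one, one_mul]
    exact hδlip z₁ z₂
  have hδabs : ∀ z, |δ z| ≤ |z| := fun z => by
    have := hδlip z 0
    simpa [hδ0] using this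
  -- δ composed with usc is usc
  have hδusc : ∀ f : X → ℝ, UpperSemicontinuous f → UpperSemicontinuous (fun y => δ (f y)) := by
    intro f hf z t ht
    set ε := (t - δ (f z)) / 2 with hε
    have hεpos : 0 < ε := by simp only [hε]; linarith
    filter_upwards [hf z (f z + ε) (by linarith)] with w hw
    have h1 : δ (f w) ≤ δ (f z + ε) := hδm hw.le
    have h2 : |δ (f z + ε) - δ (f z)| ≤ |f z + ε - f z| := hδlip _ _
    have h3 : δ (f z + ε) - δ (f z) ≤ ε := by
      have := (abs_le.1 h2).2
      rw [add_sub_cancel_left] at this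
      rwa [abs_of_pos hεpos] at this
    have : δ (f w) < t := by simp only [hε] at h3 ⊢; linarith
    exact this
  -- integrability of δ ∘ f
  have hIδ : ∀ (f : X → ℝ), Measurable f → ∀ (K : ℝ), (∀ y, |f y| ≤ K * ω y) →
      ∀ p ∈ D, Integrable (fun y => δ (f y)) (q p) := by
    intro f hfm K hfK p hp
    refine (((hωq p hp).1.const_mul K)).mono' (hδcont.measurable.comp hfm).aestronglyMeasurable
      (Filter.Eventually.of_forall fun y => ?_)
    rw [Real.norm_eq_abs]
    exact le_trans (hδabs _) (hfK y)
  -- element bounds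
  have hElt : ∀ (f : X → ℝ), Measurable f → ∀ K, 0 ≤ K → (∀ y, |f y| ≤ K * ω y) →
      ∀ x a, (x, a) ∈ D → |u (x, a) + ∫ y, δ (f y) ∂(q (x, a))| ≤ (max b c + K * α) * ω x := by
    intro f hfm K hK hfK x a ha
    have hIa := hIδ f hfm K hfK (x, a) ha
    have hωIa := (hωq (x, a) ha).1
    have hint : |∫ y, δ (f y) ∂(q (x, a))| ≤ K * (α * ω x) := by
      have h1 : |∫ y, δ (f y) ∂(q (x, a))| ≤ ∫ y, |δ (f y)| ∂(q (x, a)) := by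
        simpa [Real.norm_eq_abs] using norm_integral_le_integral_norm (fun y => δ (f y)) (μ := q (x,a))
      have h2 : ∫ y, |δ (f y)| ∂(q (x, a)) ≤ ∫ y, K * ω y ∂(q (x, a)) := by
        refine integral_mono hIa.abs (hωIa.const_mul K) fun y => le_trans (hδabs _) (hfK y)
      have h3 : ∫ y, K * ω y ∂(q (x, a)) = K * ∫ y, ω y ∂(q (x, a)) := integral_const_mul K _
      have h4 : K * ∫ y, ω y ∂(q (x, a)) ≤ K * (α * ω x) :=
        mul_le_mul_of_nonneg_left (hωq (x, a) ha).2 hK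
      linarith
    have hu1 := (huA (x, a) ha).1
    have hu2 := (huA (x, a) ha).2
    have hbc1 : b ≤ max b c := le_max_left _ _
    have hbc2 : c ≤ max b c := le_max_right _ _
    have hωpos := (hω0 x).le
    rw [abs_le] at hint ⊢
    constructor
    · have : -(b * ω x) ≤ u (x, a) := hu1
      have hb' : b * ω x ≤ max b c * ω x := mul_le_mul_of_nonneg_right hbc1 hωpos
      have hKα : K * (α * ω x) = K * α * ω x := by ring
      nlinarith [hint.1]
    · have hc' : c * ω x ≤ max b c * ω x := mul_le_mul_of_nonneg_right hbc2 hωpos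
      nlinarith [hint.2]
  -- image sets are nonempty and bounded above
  have hSne : ∀ (f : X → ℝ) (x : X),
      ((fun a => u (x, a) + ∫ y, δ (f y) ∂(q (x, a))) '' {a : A | (x, a) ∈ D}).Nonempty := by
    intro f x
    obtain ⟨a, ha⟩ := hDne x
    exact ⟨_, ⟨a, ha, rfl⟩⟩
  have hSbdd : ∀ (f : X → ℝ), Measurable f → ∀ K, 0 ≤ K → (∀ y, |f y| ≤ K * ω y) → ∀ x,
      BddAbove ((fun a => u (x, a) + ∫ y, δ (f y) ∂(q (x, a))) '' {a : A | (x, a) ∈ D}) := by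
    intro f hfm K hK hfK x
    refine ⟨(max b c + K * α) * ω x, ?_⟩
    rintro _ ⟨a, ha, rfl⟩
    exact (abs_le.1 (hElt f hfm K hK hfK x a ha)).2
  -- bound on the Bellman operator
  have hBellb : ∀ (f : X → ℝ), Measurable f → ∀ K, 0 ≤ K → (∀ y, |f y| ≤ K * ω y) →
      ∀ x, |bellmanOp q D u δ f x| ≤ (max b c + K * α) * ω x := by
    intro f hfm K hK hfK x
    rw [abs_le]
    constructor
    · obtain ⟨a, ha⟩ := hDne x
      have h1 : -((max b c + K * α) * ω x) ≤ u (x, a) + ∫ y, δ (f y) ∂(q (x, a)) :=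
        (abs_le.1 (hElt f hfm K hK hfK x a ha)).1
      exact le_trans h1 (le_csSup (hSbdd f hfm K hK hfK x) ⟨a, ha, rfl⟩)
    · refine csSup_le (hSne f x) ?_
      rintro _ ⟨a, ha, rfl⟩
      exact (abs_le.1 (hElt f hfm K hK hfK x a ha)).2
  -- integral difference bound
  have hIdiff : ∀ (f g : X → ℝ), Measurable f → Measurable g →
      ∀ Kf, (∀ y, |f y| ≤ Kf * ω y) → ∀ Kg, (∀ y, |g y| ≤ Kg * ω y) →
      ∀ e, 0 ≤ e → (∀ y, |f y - g y| ≤ e * ω y) →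
      ∀ x a, (x, a) ∈ D →
        |(∫ y, δ (f y) ∂(q (x, a))) - ∫ y, δ (g y) ∂(q (x, a))| ≤ α * γ e * ω x := by
    intro f g hfm hgm Kf hfK Kg hgK e he hfg x a ha
    rcases eq_or_lt_of_le he with he0 | hepos
    · have hfg_eq : ∀ y, f y = g y := by
        intro y
        have := hfg y
        rw [← he0, zero_mul, abs_nonpos_iff] at this
        linarith [sub_eq_zero.1 this]
      have : (∫ y, δ (f y) ∂(q (x, a))) = ∫ y, δ (g y) ∂(q (x, a)) := by
        congr 1
        ext y
        rw [hfg_eq y]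
      rw [this, sub_self, abs_zero, ← he0, hγ00]
      simp
    · have hIf := hIδ f hfm Kf hfK (x, a) ha
      have hIg := hIδ g hgm Kg hgK (x, a) ha
      have hωIa := (hωq (x, a) ha).1
      have h1 : (∫ y, δ (f y) ∂(q (x, a))) - ∫ y, δ (g y) ∂(q (x, a))
          = ∫ y, (δ (f y) - δ (g y)) ∂(q (x, a)) := (integral_sub hIf hIg).symm
      rw [h1]
      have h2 : |∫ y, (δ (f y) - δ (g y)) ∂(q (x, a))|
          ≤ ∫ y, |δ (f y) - δ (g y)| ∂(q (x, a)) := by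
        simpa [Real.norm_eq_abs] using
          norm_integral_le_integral_norm (fun y => δ (f y) - δ (g y)) (μ := q (x,a))
      have hptw : ∀ y, |δ (f y) - δ (g y)| ≤ γ e * ω y := by
        intro y
        have ha1 : |δ (f y) - δ (g y)| ≤ γ |f y - g y| := hδγ _ _
        have ha2 : γ |f y - g y| ≤ γ (e * ω y) := by
          refine hγm (Set.mem_Ici.2 (abs_nonneg _)) (Set.mem_Ici.2 ?_) (hfg y)
          exact mul_nonneg hepos.le (hω0 y).le
        have ha3 : γ (e * ω y) ≤ ω y * γ e := by
          have := hγω y e hepos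
          rwa [mul_comm (ω y) e] at this
        calc |δ (f y) - δ (g y)| ≤ γ |f y - g y| := ha1
          _ ≤ γ (e * ω y) := ha2
          _ ≤ ω y * γ e := ha3
          _ = γ e * ω y := mul_comm _ _
      have h3 : ∫ y, |δ (f y) - δ (g y)| ∂(q (x, a)) ≤ ∫ y, γ e * ω y ∂(q (x, a)) :=
        integral_mono (hIf.sub hIg).abs (hωIa.const_mul _) hptw
      have hγe : 0 ≤ γ e := hγ0 e he
      have h4 : ∫ y, γ e * ω y ∂(q (x, a)) = γ e * ∫ y, ω y ∂(q (x, a)) := integral_const_mul _ _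
      have h5 : γ e * ∫ y, ω y ∂(q (x, a)) ≤ γ e * (α * ω x) :=
        mul_le_mul_of_nonneg_left (hωq (x, a) ha).2 hγe
      have : α * γ e * ω x = γ e * (α * ω x) := by ring
      rw [this]
      linarith
  -- Bellman contraction bound
  have hBdiff : ∀ (f g : X → ℝ), Measurable f → Measurable g →
      ∀ Kf, (∀ y, |f y| ≤ Kf * ω y) → ∀ Kg, (∀ y, |g y| ≤ Kg * ω y) →
      ∀ e, 0 ≤ e → (∀ y, |f y - g y| ≤ e * ω y) →
      ∀ x, |bellmanOp q D u δ f x - bellmanOp q D u δ g x| ≤ α * γ e * ω x := by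
    intro f g hfm hgm Kf hfK Kg hgK e he hfg x
    have hKf0 : 0 ≤ Kf := by
      obtain ⟨x₀⟩ := ‹Nonempty X›
      nlinarith [abs_nonneg (f x₀), hfK x₀, hω0 x₀]
    have hKg0 : 0 ≤ Kg := by
      obtain ⟨x₀⟩ := ‹Nonempty X›
      nlinarith [abs_nonneg (g x₀), hgK x₀, hω0 x₀]
    have hbddf := hSbdd f hfm Kf hKf0 hfK x
    have hbddg := hSbdd g hgm Kg hKg0 hgK x
    have hef : bellmanOp q D u δ f x ≤ bellmanOp q D u δ g x + α * γ e * ω x := by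
      refine csSup_le (hSne f x) ?_
      rintro _ ⟨a, ha, rfl⟩
      dsimp only
      have h1 := (abs_le.1 (hIdiff f g hfm hgm Kf hfK Kg hgK e he hfg x a ha)).2
      have h2 : u (x, a) + ∫ y, δ (g y) ∂(q (x, a)) ≤ bellmanOp q D u δ g x :=
        le_csSup hbddg ⟨a, ha, rfl⟩
      linarith
    have heg : bellmanOp q D u δ g x ≤ bellmanOp q D u δ f x + α * γ e * ω x := by
      refine csSup_le (hSne g x) ?_
      rintro _ ⟨a, ha, rfl⟩
      dsimp only
      have h1 := (abs_le.1 (hIdiff f g hfm hgm Kf hfK Kg hgK e he hfg x a ha)).1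
      have h2 : u (x, a) + ∫ y, δ (f y) ∂(q (x, a)) ≤ bellmanOp q D u δ f x :=
        le_csSup hbddf ⟨a, ha, rfl⟩
      linarith
    rw [abs_le]
    constructor <;> linarith
  -- upper semicontinuity of (x,a) ↦ u(x,a) + ∫ δ(f) dq on D
  have hGusc : ∀ (f : X → ℝ), UpperSemicontinuous f → ∀ K, (∀ y, |f y| ≤ K * ω y) →
      UpperSemicontinuousOn (fun p : X × A => u p + ∫ y, δ (f y) ∂(q p)) D := by
    intro f hfusc K hfK p₀ hp₀ t ht
    dsimp only at ht
    set G : X × A → ℝ := fun p => u p + ∫ y, δ (f y) ∂(q p) with hG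
    set ε := (t - G p₀) / 2 with hεdef
    have hεpos : 0 < ε := by simp only [hεdef]; linarith
    rw [eventually_iff_seq_eventually]
    intro zs hzs
    have hzsD : ∀ᶠ j in atTop, zs j ∈ D := hzs self_mem_nhdsWithin
    set ps : ℕ → X × A := fun j => if zs j ∈ D then zs j else p₀ with hps
    have hpsD : ∀ j, ps j ∈ D := by
      intro j
      simp only [hps]
      split_ifs with h
      · exact h
      · exact hp₀
    have hps_ev : ∀ᶠ j in atTop, ps j = zs j := by
      filter_upwards [hzsD] with j hj
      simp only [hps, if_pos hj]
    have hps_tend : Tendsto ps atTop (𝓝[D] p₀) := hzs.congr' (hps_ev.mono fun _ h => h.symm)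
    have ev₁ : ∀ᶠ j in atTop, u (ps j) < u p₀ + ε :=
      hps_tend.eventually (huusc p₀ hp₀ (u p₀ + ε) (by linarith))
    have ev₂ : ∀ᶠ j in atTop,
        (∫ y, δ (f y) ∂(q (ps j))) < (∫ y, δ (f y) ∂(q p₀)) + ε := by
      refine usc_integral_lt (fun j => q (ps j)) (q p₀) (fun j => inferInstance) inferInstance
        ω hωc hω1 (fun j => (hωq (ps j) (hpsD j)).1) (hωq p₀ hp₀).1 ?_ ?_
        (fun y => δ (f y)) (hδusc f hfusc) K
        (fun y => le_trans (hδabs _) (hfK y)) ε hεpos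
      · intro φ hφc hφb
        exact Filter.Tendsto.comp (hqw φ hφc hφb p₀ hp₀) hps_tend
      · exact Filter.Tendsto.comp (hωqc p₀ hp₀) hps_tend
    filter_upwards [ev₁, ev₂, hps_ev] with j h1 h2 h3
    have : G (ps j) < t := by
      have : G (ps j) = u (ps j) + ∫ y, δ (f y) ∂(q (ps j)) := rfl
      rw [this]
      simp only [hεdef] at h1 h2 ⊢
      have : G p₀ = u p₀ + ∫ y, δ (f y) ∂(q p₀) := rfl
      linarith [this ▸ le_refl (G p₀)]
    rwa [h3] at this
  -- sections of G are usc
  have hGsec : ∀ (f : X → ℝ), UpperSemicontinuous f → ∀ K, (∀ y, |f y| ≤ K * ω y) →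
      ∀ x' : X, UpperSemicontinuousOn (fun a => u (x', a) + ∫ y, δ (f y) ∂(q (x', a)))
        {a : A | (x', a) ∈ D} := by
    intro f hfusc K hfK x' a₀ ha₀ t ht
    have hmain := hGusc f hfusc K hfK (x', a₀) ha₀ t ht
    have hmap : Tendsto (fun a => ((x' : X), a)) (𝓝[{a : A | (x', a) ∈ D}] a₀)
        (𝓝[D] (x', a₀)) := by
      refine ContinuousWithinAt.tendsto_nhdsWithin ?_ ?_
      · exact (Continuous.continuousWithinAt (Continuous.prodMk_right x'))
      · intro a ha
        exact ha
    exact hmap.eventually hmain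
  -- existence of maximizers
  have hmax : ∀ (f : X → ℝ), UpperSemicontinuous f → ∀ K, (∀ y, |f y| ≤ K * ω y) →
      ∀ x' : X, ∃ a, (x', a) ∈ D ∧ ∀ a', (x', a') ∈ D →
        u (x', a') + ∫ y, δ (f y) ∂(q (x', a')) ≤ u (x', a) + ∫ y, δ (f y) ∂(q (x', a)) := by
    intro f hfusc K hfK x'
    obtain ⟨a, ha, hmax⟩ := usc_exists_max (hAcomp x') (hDne x')
      (hGsec f hfusc K hfK x')
    exact ⟨a, ha, fun a' ha' => hmax a' ha'⟩
  -- the Bellman operator value equals the value at a maximizer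
  have hattain : ∀ (f : X → ℝ), Measurable f → ∀ K, 0 ≤ K → (∀ y, |f y| ≤ K * ω y) →
      ∀ x' a, (x', a) ∈ D →
      (∀ a', (x', a') ∈ D →
        u (x', a') + ∫ y, δ (f y) ∂(q (x', a')) ≤ u (x', a) + ∫ y, δ (f y) ∂(q (x', a))) →
      bellmanOp q D u δ f x' = u (x', a) + ∫ y, δ (f y) ∂(q (x', a)) := by
    intro f hfm K hK hfK x' a ha hub
    refine IsGreatest.csSup_eq ⟨⟨a, ha, rfl⟩, ?_⟩
    rintro _ ⟨a', ha', rfl⟩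
    exact hub a' ha'
  -- usc of the Bellman operator
  have hVusc : ∀ (f : X → ℝ), UpperSemicontinuous f → Measurable f →
      ∀ K, 0 ≤ K → (∀ y, |f y| ≤ K * ω y) →
      UpperSemicontinuous (bellmanOp q D u δ f) := by
    intro f hfusc hfm K hK hfK x₀ t ht
    rw [eventually_iff_seq_eventually]
    intro xs hxs
    by_contra hcon
    rw [Filter.not_eventually] at hcon
    obtain ⟨φ, hφmono, hφ⟩ := Filter.extraction_of_frequently_atTop
      (hcon.mono fun j hj => not_lt.1 hj)
    -- maximizers along the subsequence
    have hsel : ∀ j, ∃ a, (xs (φ j), a) ∈ D ∧ ∀ a', (xs (φ j), a') ∈ D →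
        u (xs (φ j), a') + ∫ y, δ (f y) ∂(q (xs (φ j), a')) ≤
          u (xs (φ j), a) + ∫ y, δ (f y) ∂(q (xs (φ j), a)) :=
      fun j => hmax f hfusc K hfK (xs (φ j))
    choose as hasD hasMax using hsel
    have hxsφ : Tendsto (fun j => xs (φ j)) atTop (𝓝 x₀) :=
      hxs.comp hφmono.tendsto_atTop
    obtain ⟨a, haD, haclus⟩ := corr_clusterPt D x₀ (hAcomp x₀) hAusc _ as hasD hxsφ
    obtain ⟨ψ, hψmono, hψconv⟩ := clusterPt_subseq haclus
    have htends : Tendsto (fun j => ((xs (φ (ψ j)) : X), as (ψ j))) atTop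
        (𝓝[D] (x₀, a)) := by
      rw [tendsto_nhdsWithin_iff]
      constructor
      · exact (hxsφ.comp hψmono.tendsto_atTop).prodMk_nhds hψconv
      · exact Filter.Eventually.of_forall fun j => hasD (ψ j)
    have hGa : u (x₀, a) + ∫ y, δ (f y) ∂(q (x₀, a)) < t := by
      have h1 : u (x₀, a) + ∫ y, δ (f y) ∂(q (x₀, a)) ≤ bellmanOp q D u δ f x₀ :=
        le_csSup (hSbdd f hfm K hK hfK x₀) ⟨a, haD, rfl⟩
      linarith
    have hev := htends.eventually (hGusc f hfusc K hfK (x₀, a) haD t hGa)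
    obtain ⟨j, hj⟩ := hev.exists
    have heq : bellmanOp q D u δ f (xs (φ (ψ j)))
        = u (xs (φ (ψ j)), as (ψ j)) + ∫ y, δ (f y) ∂(q (xs (φ (ψ j)), as (ψ j))) :=
      hattain f hfm K hK hfK _ _ (hasD (ψ j)) (hasMax (ψ j))
    have hge := hφ (ψ j)
    rw [heq] at hge
    exact absurd (lt_of_le_of_lt hge hj) (lt_irrefl t)
  -- properties of the value iteration functions
  have hVn : ∀ n : ℕ, Measurable (V n) ∧ UpperSemicontinuous (V n) ∧
      ∃ K, 0 ≤ K ∧ ∀ y, |V n y| ≤ K * ω y := by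
    intro n
    induction n with
    | zero =>
      refine ⟨measurable_const, ?_, 0, le_rfl, fun y => by simp [hV]⟩
      have : V 0 = fun _ => (0:ℝ) := rfl
      rw [this]
      exact continuous_const.upperSemicontinuous
    | succ n ih =>
      obtain ⟨hm, husc, K, hK0, hKb⟩ := ih
      have hKb' : ∀ y, |V (n+1) y| ≤ (max b c + K * α) * ω y := by
        rw [hViter n]
        exact hBellb (V n) hm K hK0 hKb
      have hK0' : 0 ≤ max b c + K * α := by
        have : (0:ℝ) < max b c := lt_max_of_lt_left hb
        nlinarith
      refine ⟨?_, ?_, max b c + K * α, hK0', hKb'⟩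
      · rw [hViter n]
        exact (hVusc (V n) husc hm K hK0 hKb).measurable
      · rw [hViter n]
        exact hVusc (V n) husc hm K hK0 hKb
  -- bound for vstar
  obtain ⟨C, hC⟩ := hvstarb
  have hC0 : 0 ≤ C := by
    obtain ⟨x₀⟩ := ‹Nonempty X›
    nlinarith [abs_nonneg (vstar x₀), hC x₀, hω0 x₀]
  -- the error sequence
  set e : ℕ → ℝ := fun n => Nat.rec C (fun _ s => α * γ s) n with he
  have he0 : e 0 = C := rfl
  have heS : ∀ n, e (n + 1) = α * γ (e n) := fun n => rfl
  have henn : ∀ n, 0 ≤ e n := by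
    intro n
    induction n with
    | zero => rw [he0]; exact hC0
    | succ n ih => rw [heS]; exact mul_nonneg hα.le (hγ0 _ ih)
  have hVe : ∀ n y, |V n y - vstar y| ≤ e n * ω y := by
    intro n
    induction n with
    | zero =>
      intro y
      have : V 0 y = 0 := rfl
      rw [this, zero_sub, abs_neg, he0]
      exact hC y
    | succ n ih =>
      intro y
      obtain ⟨hm, husc, K, hK0, hKb⟩ := hVn n
      have := hBdiff (V n) vstar hm hvstarm K hKb C hC (e n) (henn n) ih y
      rw [← hT, ← hViter n, hvstarfix] at this
      rw [heS]
      exact this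
  -- the error sequence decreases to 0
  have hαγlt : ∀ s, 0 < s → α * γ s < s := by
    intro s hs
    rcases hαcase with h1 | ⟨h1, h2⟩
    · have hγs := hγlt s hs
      have hγnn := hγ0 s hs.le
      nlinarith
    · exact h2 s hs
  have hstep : ∀ n, e (n + 1) ≤ e n := by
    intro n
    rcases eq_or_lt_of_le (henn n) with h | h
    · rw [heS, ← h, hγ00, mul_zero]
    · rw [heS]; exact (hαγlt _ h).le
  have heanti : Antitone e := antitone_nat_of_succ_le hstep
  have hebdd : BddBelow (Set.range e) := ⟨0, by rintro _ ⟨n, rfl⟩; exact henn n⟩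
  have helim : Tendsto e atTop (𝓝 (⨅ n, e n)) := tendsto_atTop_ciInf heanti hebdd
  have hL0 : (⨅ n, e n) = 0 := by
    set L := ⨅ n, e n with hLdef
    have hLnn : 0 ≤ L := le_ciInf henn
    rcases eq_or_lt_of_le hLnn with h | h
    · exact h.symm
    · exfalso
      have hLle : ∀ n, L ≤ e n := fun n => ciInf_le hebdd n
      have hkey : ∀ n, e (n + 1) ≤ α * γ L + α * (e n - L) := by
        intro n
        have hge := hLle n
        have h1 : γ (e n) ≤ γ L + γ (e n - L) := by
          have := hγsub L hLnn (e n - L) (by linarith)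
          have heq : L + (e n - L) = e n := by ring
          rwa [heq] at this
        have h2 : γ (e n - L) ≤ e n - L := hγle _ (by linarith)
        have h3 : γ (e n) ≤ γ L + (e n - L) := by linarith
        rw [heS]
        calc α * γ (e n) ≤ α * (γ L + (e n - L)) := mul_le_mul_of_nonneg_left h3 hα.le
          _ = α * γ L + α * (e n - L) := by ring
      have hlim2 : Tendsto (fun n => α * γ L + α * (e n - L)) atTop (𝓝 (α * γ L)) := by
        have h1 : Tendsto (fun n => e n - L) atTop (𝓝 0) := by
          simpa using helim.sub (tendsto_const_nhds (x := L))
        have h2 : Tendsto (fun n => α * (e n - L)) atTop (𝓝 0) := by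
          simpa using h1.const_mul α
        simpa using (tendsto_const_nhds (x := α * γ L)).add h2
      have hlim1 : Tendsto (fun n => e (n + 1)) atTop (𝓝 L) :=
        helim.comp (tendsto_add_atTop_nat 1)
      have hLle2 : L ≤ α * γ L := le_of_tendsto_of_tendsto' hlim1 hlim2 hkey
      have := hαγlt L h
      linarith
  have hetends : Tendsto e atTop (𝓝 0) := hL0 ▸ helim
  have hγetends : Tendsto (fun n => γ (e n)) atTop (𝓝 0) := by
    refine squeeze_zero (fun n => hγ0 _ (henn n)) (fun n => hγle _ (henn n)) hetends
  -- vstar is upper semicontinuous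
  have hvusc : UpperSemicontinuous vstar := by
    intro x₀ t ht
    have hωx₀ : 0 < ω x₀ := hω0 x₀
    have htends : Tendsto (fun n => e n * ω x₀) atTop (𝓝 0) := by
      simpa using hetends.mul_const (ω x₀)
    obtain ⟨n, hn⟩ := (htends.eventually_lt_const
      (show (0:ℝ) < (t - vstar x₀)/3 by linarith)).exists
    obtain ⟨hm, husc, K, hK0, hKb⟩ := hVn n
    have hub : ∀ x', vstar x' ≤ V n x' + e n * ω x' := by
      intro x'
      have := (abs_le.1 (hVe n x')).1
      linarith
    have hVnx₀ : V n x₀ ≤ vstar x₀ + e n * ω x₀ := by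
      have := (abs_le.1 (hVe n x₀)).2
      linarith
    set r := t - (V n x₀ + e n * ω x₀) with hr
    have hrpos : 0 < r := by
      have h1 : 0 ≤ e n * ω x₀ := mul_nonneg (henn n) hωx₀.le
      simp only [hr]
      nlinarith
    have ev1 : ∀ᶠ x' in 𝓝 x₀, V n x' < V n x₀ + r/2 :=
      husc x₀ (V n x₀ + r/2) (by linarith)
    have ev2 : ∀ᶠ x' in 𝓝 x₀, e n * ω x' < e n * ω x₀ + r/2 := by
      have hcont : Tendsto (fun x' => e n * ω x') (𝓝 x₀) (𝓝 (e n * ω x₀)) :=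
        (hωc.tendsto x₀).const_mul (e n)
      exact hcont.eventually_lt_const (by linarith)
    filter_upwards [ev1, ev2] with x' h1 h2
    have := hub x'
    simp only [hr] at h1 h2 ⊢
    linarith
  -- now fix x
  intro x
  -- the statement's argmax sets
  have hmaxV : ∀ n : ℕ, ∃ a, (x, a) ∈ D ∧ ∀ a', (x, a') ∈ D →
      u (x, a') + ∫ y, δ (V n y) ∂(q (x, a')) ≤ u (x, a) + ∫ y, δ (V n y) ∂(q (x, a)) := by
    intro n
    obtain ⟨hm, husc, K, hK0, hKb⟩ := hVn n
    exact hmax (V n) husc K hKb x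
  constructor
  · -- Part 1: existence
    choose aseq haseqD haseqM using hmaxV
    obtain ⟨a, haD, haclus⟩ := corr_clusterPt D x (hAcomp x) hAusc (fun _ => x) aseq
      (fun k => haseqD k) tendsto_const_nhds
    refine ⟨a, aseq, fun n => ?_, haclus⟩
    exact ⟨haseqD n, haseqM n⟩
  · -- Part 2: accumulation points are maximizers for vstar
    rintro a ⟨aseq, hseq, hclus⟩
    have haseqD : ∀ n, (x, aseq n) ∈ D := fun n => (hseq n).1
    have haseqM : ∀ n, ∀ b', (x, b') ∈ D →
        u (x, b') + ∫ y, δ (V n y) ∂(q (x, b')) ≤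
          u (x, aseq n) + ∫ y, δ (V n y) ∂(q (x, aseq n)) := fun n => (hseq n).2
    -- a is in the fiber
    have haD : (x, a) ∈ D := by
      have hclosed : IsClosed {a' : A | (x, a') ∈ D} := (hAcomp x).isClosed
      have hle : map aseq atTop ≤ 𝓟 {a' : A | (x, a') ∈ D} := by
        refine le_principal_iff.2 (mem_map.2 ?_)
        exact Filter.univ_mem' fun n => haseqD n
      have : ClusterPt a (𝓟 {a' : A | (x, a') ∈ D}) := hclus.clusterPt.mono hle
      have := mem_closure_iff_clusterPt.2 this
      rwa [hclosed.closure_eq] at this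
    refine ⟨haD, fun bb hbb => ?_⟩
    -- Gstar notation
    set Gstar : A → ℝ := fun a' => u (x, a') + ∫ y, δ (vstar y) ∂(q (x, a')) with hGstar
    have hbddstar := hSbdd vstar hvstarm C hC0 hC x
    have hGub : Gstar bb ≤ vstar x := by
      have h1 : Gstar bb ≤ bellmanOp q D u δ vstar x := le_csSup hbddstar ⟨bb, hbb, rfl⟩
      have h2 : bellmanOp q D u δ vstar x = vstar x := by
        rw [← hT]
        exact congrFun hvstarfix x
      linarith
    have hkey : vstar x ≤ Gstar a := by
      refine le_of_forall_pos_le_add fun ε hε => ?_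
      obtain ⟨ψ, hψmono, hψconv⟩ := clusterPt_subseq hclus
      -- three eventual facts
      have hE1 : ∀ᶠ j in (atTop : Filter ℕ), vstar x - ε/3 < V (ψ j + 1) x := by
        have hVx : Tendsto (fun n => V n x) atTop (𝓝 (vstar x)) := by
          have h0 : Tendsto (fun n => V n x - vstar x) atTop (𝓝 0) := by
            refine squeeze_zero_norm (fun n => ?_) (by simpa using hetends.mul_const (ω x))
            rw [Real.norm_eq_abs]
            exact hVe n x
          have := h0.add (tendsto_const_nhds (x := vstar x))
          simpa using this
        have hidx2 : Tendsto (fun j => ψ j + 1) atTop atTop :=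
          tendsto_atTop_mono (fun j => Nat.le_succ (ψ j)) hψmono.tendsto_atTop
        have hVψ : Tendsto (fun j => V (ψ j + 1) x) atTop (𝓝 (vstar x)) :=
          hVx.comp hidx2
        exact hVψ.eventually_const_lt (by linarith)
      have hE2 : ∀ᶠ j in (atTop : Filter ℕ), α * γ (e (ψ j)) * ω x < ε/3 := by
        have h0 : Tendsto (fun n => α * γ (e n) * ω x) atTop (𝓝 0) := by
          have := (hγetends.const_mul α).mul_const (ω x)
          simpa using this
        exact (h0.comp hψmono.tendsto_atTop).eventually_lt_const (by linarith)
      have hE3 : ∀ᶠ j in (atTop : Filter ℕ), Gstar (aseq (ψ j)) < Gstar a + ε/3 := by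
        have huscG := hGusc vstar hvusc C hC (x, a) haD
        have hGax : (fun p : X × A => u p + ∫ y, δ (vstar y) ∂(q p)) (x, a) < Gstar a + ε/3 := by
          simp only [hGstar]
          linarith
        have hev := huscG (Gstar a + ε/3) hGax
        have htend : Tendsto (fun j => ((x : X), aseq (ψ j))) atTop (𝓝[D] (x, a)) := by
          rw [tendsto_nhdsWithin_iff]
          exact ⟨tendsto_const_nhds.prodMk_nhds hψconv,
            Filter.Eventually.of_forall fun j => haseqD (ψ j)⟩
        exact htend.eventually hev
      obtain ⟨j, h1, h2, h3⟩ := (hE1.and (hE2.and hE3)).exists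
      -- identity: V (ψ j + 1) x equals the maximal value
      obtain ⟨hmj, huscj, Kj, hKj0, hKjb⟩ := hVn (ψ j)
      have hid : V (ψ j + 1) x = u (x, aseq (ψ j)) + ∫ y, δ (V (ψ j) y) ∂(q (x, aseq (ψ j))) := by
        rw [hViter (ψ j), hT]
        exact hattain (V (ψ j)) hmj Kj hKj0 hKjb x (aseq (ψ j)) (haseqD (ψ j)) (haseqM (ψ j))
      -- integral comparison
      have hcomp := (abs_le.1 (hIdiff (V (ψ j)) vstar hmj hvstarm Kj hKjb C hC (e (ψ j))
        (henn (ψ j)) (hVe (ψ j)) x (aseq (ψ j)) (haseqD (ψ j)))).2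
      have : vstar x < Gstar a + ε := by
        have hGs : Gstar (aseq (ψ j)) = u (x, aseq (ψ j)) + ∫ y, δ (vstar y) ∂(q (x, aseq (ψ j))) := rfl
        rw [hid] at h1
        rw [hGs] at h3
        have hA : vstar x < u (x, aseq (ψ j)) + (∫ y, δ (V (ψ j) y) ∂(q (x, aseq (ψ j)))) + ε/3 := by
          linarith
        have hB : (∫ y, δ (V (ψ j) y) ∂(q (x, aseq (ψ j)))) ≤
            (∫ y, δ (vstar y) ∂(q (x, aseq (ψ j)))) + α * γ (e (ψ j)) * ω x := by
          linarith
        have hCC : u (x, aseq (ψ j)) + (∫ y, δ (vstar y) ∂(q (x, aseq (ψ j)))) < Gstar a + ε/3 := by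
          linarith
        calc vstar x < u (x, aseq (ψ j)) + (∫ y, δ (V (ψ j) y) ∂(q (x, aseq (ψ j)))) + ε/3 := hA
          _ ≤ u (x, aseq (ψ j)) + ((∫ y, δ (vstar y) ∂(q (x, aseq (ψ j)))) + α * γ (e (ψ j)) * ω x) + ε/3 := by
            linarith [hB]
          _ < (Gstar a + ε/3) + (ε/3) + ε/3 := by linarith [hCC, h2]
          _ = Gstar a + ε := by ring
      linarith
    have := hGub
    simp only [hGstar] at hkey this ⊢
    linarith
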